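/- In any nondegenerate triangle with circumradius R and exradius rₐ opposite to A, the distance between the excenter Iₐ opposite A and the adjoint Nagel point Nₐ satisfies IₐNₐ² = 12Rrₐ + 6rₐ² + (a² + b² + c²)/2. -/

import Mathlib

set_option maxHeartbeats 1000000

open scoped InnerProductSpace

/-- in any nondegenerate triangle with circumradius `R` and exradius `rₐ`
opposite `A`, the excenter `Iₐ` opposite `A` and the adjoint Nagel point `Nₐ` satisfy
`IₐNₐ² = 12Rrₐ + 6rₐ² + (a² + b² + c²)/2`. -/
theorem stmt_15 (A B C O Ia Na : EuclideanSpace ℝ (Fin 2)) (a b c s S R ra : ℝ)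
    (hABC : AffineIndependent ℝ ![A, B, C])
    (ha : a = dist B C) (hb : b = dist C A) (hc : c = dist A B)
    (hs : s = (a + b + c) / 2)
    (hS : S = Real.sqrt (s * (s - a) * (s - b) * (s - c)))
    (hra : ra = S / (s - a))
    (hOA : dist O A = R) (hOB : dist O B = R) (hOC : dist O C = R)
    (hIa : ∀ M : EuclideanSpace ℝ (Fin 2),
      (-a + b + c) • (Ia - M) = (-a) • (A - M) + b • (B - M) + c • (C - M))
    (hNa : ∀ M : EuclideanSpace ℝ (Fin 2),
      (s + (c - s) + (b - s)) • (Na - M) =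
        s • (A - M) + (c - s) • (B - M) + (b - s) • (C - M)) :
    dist Ia Na ^ 2 = 12 * R * ra + 6 * ra ^ 2 + (a ^ 2 + b ^ 2 + c ^ 2) / 2 := by
  have hncol : ¬ Collinear ℝ ({A, B, C} : Set (EuclideanSpace ℝ (Fin 2))) :=
    affineIndependent_iff_not_collinear_set.mp hABC
  -- strict triangle inequalities
  have tri_a : dist B C < dist B A + dist A C := by
    refine lt_of_le_of_ne (dist_triangle B A C) (Ne.symm fun h => hncol ?_)
    exact ((dist_add_dist_eq_iff.mp h).collinear).subset
      (by intro x hx; simp only [Set.mem_insert_iff, Set.mem_singleton_iff] at *; tauto)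
  have tri_b : dist C A < dist C B + dist B A := by
    refine lt_of_le_of_ne (dist_triangle C B A) (Ne.symm fun h => hncol ?_)
    exact ((dist_add_dist_eq_iff.mp h).collinear).subset
      (by intro x hx; simp only [Set.mem_insert_iff, Set.mem_singleton_iff] at *; tauto)
  have tri_c : dist A B < dist A C + dist C B := by
    refine lt_of_le_of_ne (dist_triangle A C B) (Ne.symm fun h => hncol ?_)
    exact ((dist_add_dist_eq_iff.mp h).collinear).subset
      (by intro x hx; simp only [Set.mem_insert_iff, Set.mem_singleton_iff] at *; tauto)
  rw [dist_comm B A, dist_comm A C, ← hc, ← hb, ← ha] at tri_a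
  rw [dist_comm C B, dist_comm B A, ← ha, ← hc, ← hb] at tri_b
  rw [dist_comm A C, dist_comm C B, ← hb, ← ha, ← hc] at tri_c
  -- tri_a : a < c + b, tri_b : b < a + c, tri_c : c < b + a
  have hapos : 0 < a := by linarith
  have hbpos : 0 < b := by linarith
  have hcpos : 0 < c := by linarith
  subst hs hra
  have hsa : (0:ℝ) < (a + b + c)/2 - a := by linarith
  have hsb : (0:ℝ) < (a + b + c)/2 - b := by linarith
  have hsc : (0:ℝ) < (a + b + c)/2 - c := by linarith
  have hspos : (0:ℝ) < (a + b + c)/2 := by linarith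
  have hprod : (0:ℝ) < (a + b + c)/2 * ((a + b + c)/2 - a) * ((a + b + c)/2 - b)
      * ((a + b + c)/2 - c) := by positivity
  have hS2 : S ^ 2 = (a + b + c)/2 * ((a + b + c)/2 - a) * ((a + b + c)/2 - b)
      * ((a + b + c)/2 - c) := by rw [hS]; exact Real.sq_sqrt hprod.le
  have hSpos : 0 < S := by rw [hS]; exact Real.sqrt_pos.mpr hprod
  have hRpos : 0 ≤ R := hOA ▸ dist_nonneg
  -- vectors from circumcenter
  set u := A - O with hu
  set v := B - O with hv
  set w := C - O with hw
  have huu : ⟪u, u⟫_ℝ = R ^ 2 := by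
    rw [real_inner_self_eq_norm_sq, hu, ← dist_eq_norm, dist_comm, hOA]
  have hvv : ⟪v, v⟫_ℝ = R ^ 2 := by
    rw [real_inner_self_eq_norm_sq, hv, ← dist_eq_norm, dist_comm, hOB]
  have hww : ⟪w, w⟫_ℝ = R ^ 2 := by
    rw [real_inner_self_eq_norm_sq, hw, ← dist_eq_norm, dist_comm, hOC]
  have hnu : ‖u‖ = R := by rw [hu, ← dist_eq_norm, dist_comm, hOA]
  have hnv : ‖v‖ = R := by rw [hv, ← dist_eq_norm, dist_comm, hOB]
  have hnw : ‖w‖ = R := by rw [hw, ← dist_eq_norm, dist_comm, hOC]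
  have hsub : ∀ X Y : EuclideanSpace ℝ (Fin 2), (X - O) - (Y - O) = X - Y := by
    intro X Y; abel
  have huv : ⟪u, v⟫_ℝ = R ^ 2 - c ^ 2 / 2 := by
    have h := norm_sub_sq_real u v
    rw [hnu, hnv, show u - v = A - B from hsub A B, ← dist_eq_norm, ← hc] at h
    linarith
  have huw : ⟪u, w⟫_ℝ = R ^ 2 - b ^ 2 / 2 := by
    have h := norm_sub_sq_real u w
    rw [hnu, hnw, show u - w = A - C from hsub A C, ← dist_eq_norm, dist_comm, ← hb] at h
    linarith
  have hvw : ⟪v, w⟫_ℝ = R ^ 2 - a ^ 2 / 2 := by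
    have h := norm_sub_sq_real v w
    rw [hnv, hnw, show v - w = B - C from hsub B C, ← dist_eq_norm, ← ha] at h
    linarith
  -- linear dependence gives the circumradius relation 16 S² R² = (abc)²
  have hdep : ¬ LinearIndependent ℝ ![u, v, w] := by
    intro h
    have := h.fintype_card_le_finrank
    simp [finrank_euclideanSpace] at this
  obtain ⟨g, hg0, i, hi⟩ := Fintype.not_linearIndependent_iff.mp hdep
  have hg : g 0 • u + g 1 • v + g 2 • w = 0 := by
    simpa [Fin.sum_univ_three] using hg0
  have inner_eq : ∀ z : EuclideanSpace ℝ (Fin 2),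
      g 0 * ⟪u, z⟫_ℝ + g 1 * ⟪v, z⟫_ℝ + g 2 * ⟪w, z⟫_ℝ = 0 := by
    intro z
    have h := congrArg (fun x : EuclideanSpace ℝ (Fin 2) => ⟪x, z⟫_ℝ) hg
    simp only [inner_add_left, real_inner_smul_left, inner_zero_left] at h
    exact h
  have E0 := inner_eq u
  have E1 := inner_eq v
  have E2 := inner_eq w
  rw [huu, real_inner_comm u v, huv, real_inner_comm u w, huw] at E0
  rw [huv, hvv, real_inner_comm v w, hvw] at E1
  rw [huw, hvw, hww] at E2
  have hdet : (16 * S ^ 2 * R ^ 2 - (a * b * c) ^ 2) * g i = 0 := by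
    have key : ∀ j : Fin 3, (16 * S ^ 2 * R ^ 2 - (a * b * c) ^ 2) * g j = 0 := by
      intro j
      fin_cases j
      · show (16 * S ^ 2 * R ^ 2 - (a * b * c) ^ 2) * g 0 = 0
        linear_combination (4 * ((R^2)^2 - (R^2 - a^2/2)^2)) * E0
          + (4 * ((R^2 - b^2/2) * (R^2 - a^2/2) - (R^2 - c^2/2) * R^2)) * E1
          + (4 * ((R^2 - c^2/2) * (R^2 - a^2/2) - (R^2 - b^2/2) * R^2)) * E2
          + (16 * R^2 * g 0) * hS2
      · show (16 * S ^ 2 * R ^ 2 - (a * b * c) ^ 2) * g 1 = 0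
        linear_combination (4 * ((R^2 - b^2/2) * (R^2 - a^2/2) - (R^2 - c^2/2) * R^2)) * E0
          + (4 * ((R^2)^2 - (R^2 - b^2/2)^2)) * E1
          + (4 * ((R^2 - c^2/2) * (R^2 - b^2/2) - (R^2 - a^2/2) * R^2)) * E2
          + (16 * R^2 * g 1) * hS2
      · show (16 * S ^ 2 * R ^ 2 - (a * b * c) ^ 2) * g 2 = 0
        linear_combination (4 * ((R^2 - c^2/2) * (R^2 - a^2/2) - (R^2 - b^2/2) * R^2)) * E0
          + (4 * ((R^2 - c^2/2) * (R^2 - b^2/2) - (R^2 - a^2/2) * R^2)) * E1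
          + (4 * ((R^2)^2 - (R^2 - c^2/2)^2)) * E2
          + (16 * R^2 * g 2) * hS2
    exact key i
  have hRS : 16 * S ^ 2 * R ^ 2 - (a * b * c) ^ 2 = 0 :=
    by rcases mul_eq_zero.mp hdet with h | h
       · exact h
       · exact absurd h hi
  have h4SR : 4 * S * R = a * b * c := by
    have hfac : (4 * S * R - a * b * c) * (4 * S * R + a * b * c) = 0 := by
      linear_combination hRS
    rcases mul_eq_zero.mp hfac with h | h
    · linarith
    · nlinarith [mul_pos (mul_pos hapos hbpos) hcpos, mul_nonneg (mul_nonneg (by norm_num : (0:ℝ) ≤ 4) hSpos.le) hRpos]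
  -- the difference vector
  have hD : (-a + b + c) • (Ia - Na) =
      (-(2*a + b + c)) • u + (a + 2*b - c) • v + (a - b + 2*c) • w := by
    have h1 := hIa O
    have h2 := hNa O
    rw [← hu, ← hv, ← hw] at h1 h2
    linear_combination (norm := module) h1 - (2:ℝ) • h2
  have hnD : ‖(-(2*a + b + c)) • u + (a + 2*b - c) • v + (a - b + 2*c) • w‖ ^ 2
      = (-a + b + c) ^ 2 * dist Ia Na ^ 2 := by
    rw [← hD, norm_smul, mul_pow, Real.norm_eq_abs, sq_abs, dist_eq_norm]
  have hexp : ‖(-(2*a + b + c)) • u + (a + 2*b - c) • v + (a - b + 2*c) • w‖ ^ 2 =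
      (-(2*a + b + c))^2 * ⟪u, u⟫_ℝ + (a + 2*b - c)^2 * ⟪v, v⟫_ℝ
      + (a - b + 2*c)^2 * ⟪w, w⟫_ℝ + 2*(-(2*a + b + c))*(a + 2*b - c)*⟪u, v⟫_ℝ
      + 2*(-(2*a + b + c))*(a - b + 2*c)*⟪u, w⟫_ℝ
      + 2*(a + 2*b - c)*(a - b + 2*c)*⟪v, w⟫_ℝ := by
    rw [← real_inner_self_eq_norm_sq]
    simp only [inner_add_left, inner_add_right, real_inner_smul_left, real_inner_smul_right,
      real_inner_comm v u, real_inner_comm w u, real_inner_comm w v]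
    ring
  rw [hnD, huu, hvv, hww, huv, huw, hvw] at hexp
  -- final algebra
  have hk : (-a + b + c) ≠ 0 := by linarith
  have hsa' : (a + b + c)/2 - a ≠ 0 := ne_of_gt hsa
  have hS0 : S ≠ 0 := ne_of_gt hSpos
  have hd2 : dist Ia Na ^ 2 = (6*(a*b*c)*(-a+b+c) + 24*S^2
      + (-a+b+c)^2*(a^2+b^2+c^2)/2) / (-a+b+c)^2 := by
    rw [eq_div_iff (pow_ne_zero 2 hk)]
    linear_combination hexp - 24*hS2
  have h12 : 12 * R * (S / ((a+b+c)/2 - a)) = 6*(a*b*c)/(-a+b+c) := by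
    have hk2 : a + b + c - 2*a ≠ 0 := by linarith
    rw [eq_div_iff hk]
    have e : S / ((a+b+c)/2 - a) * (-a+b+c) = 2*S := by
      rw [div_mul_eq_mul_div, div_eq_iff hsa']
      ring
    rw [mul_assoc, e]
    linear_combination 6 * h4SR
  have h6 : 6 * (S / ((a+b+c)/2 - a))^2 = 24*S^2/(-a+b+c)^2 := by
    rw [div_pow, eq_div_iff (pow_ne_zero 2 hk), ← mul_div_assoc, div_mul_eq_mul_div,
      div_eq_iff (pow_ne_zero 2 hsa')]
    ring
  rw [hd2, h12, h6, div_eq_iff (pow_ne_zero 2 hk)]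
  field_simp
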